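/- Let h : ℝ^d → ℝ be L-smooth and satisfy the PL condition with constant μ: ‖∇h(x)‖² ≥ 2μ(h(x) − h*) where h* = inf h. Then h satisfies the quadratic growth condition: h(x) − h* ≥ (μ/2)·dist(x, X*)² for all x, where X* is the set of minimizers and dist the Euclidean distance. -/

import Mathlib

open RealInnerProductSpace
section PLAux
variable {d : ℕ}
local notation "E" => EuclideanSpace ℝ (Fin d)

lemma curve_deriv (h : E → ℝ) (g : E → E) (hdiff : ∀ x, HasGradientAt h (g x) x)
    (x v : E) (t : ℝ) :
    HasDerivAt (fun s : ℝ => h (x + s • v)) ⟪g (x + t • v), v⟫ t := by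
  have h1 : HasDerivAt (fun s : ℝ => x + s • v) v t := by
    simpa using ((hasDerivAt_id t).smul_const v).const_add x
  have h2 := (hdiff (x + t • v)).hasFDerivAt.comp_hasDerivAt t h1
  simp [InnerProductSpace.toDual_apply_apply] at h2
  exact h2

lemma descent (h : E → ℝ) (g : E → E) (L : ℝ)
    (hdiff : ∀ x, HasGradientAt h (g x) x)
    (hlip : ∀ x₁ x₂, ‖g x₁ - g x₂‖ ≤ L * ‖x₁ - x₂‖) (x y : E) :
    h y ≤ h x + ⟪g x, y - x⟫ + L / 2 * ‖y - x‖ ^ 2 := by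
  set v := y - x with hv
  set w : ℝ → ℝ := fun t => h x + t * ⟪g x, v⟫ + L/2 * t^2 * ‖v‖^2 - h (x + t • v) with hwdef
  have hw : ∀ t : ℝ, HasDerivAt w (⟪g x, v⟫ + L * t * ‖v‖^2 - ⟪g (x + t • v), v⟫) t := by
    intro t
    have h1 : HasDerivAt (fun t : ℝ => h x + t * ⟪g x, v⟫ + L/2 * t^2 * ‖v‖^2)
        (⟪g x, v⟫ + L * t * ‖v‖^2) t := by
      have := (((hasDerivAt_pow 2 t).const_mul (L/2)).mul_const (‖v‖^2)).const_add
        (h x + t * ⟪g x, v⟫)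
      have h2 : HasDerivAt (fun t : ℝ => h x + t * ⟪g x, v⟫) ⟪g x, v⟫ t := by
        simpa using ((hasDerivAt_id t).mul_const ⟪g x, v⟫).const_add (h x)
      have h3 := h2.add (((hasDerivAt_pow 2 t).const_mul (L/2)).mul_const (‖v‖^2))
      exact h3.congr_deriv (by ring)
    exact h1.sub (curve_deriv h g hdiff x v t)
  have hd : ∀ t : ℝ, t ∈ Set.Ioo (0:ℝ) 1 → 0 ≤ deriv w t := by
    intro t ht
    rw [(hw t).deriv]
    have hb : ⟪g (x + t • v), v⟫ - ⟪g x, v⟫ ≤ L * t * ‖v‖^2 := by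
      have h1 : ⟪g (x + t • v) - g x, v⟫ ≤ ‖g (x + t • v) - g x‖ * ‖v‖ :=
        real_inner_le_norm _ _
      have h2 : ‖g (x + t • v) - g x‖ ≤ L * (t * ‖v‖) := by
        have := hlip (x + t • v) x
        simpa [norm_smul, abs_of_pos ht.1, mul_assoc] using this
      have h3 : ‖g (x + t • v) - g x‖ * ‖v‖ ≤ L * (t * ‖v‖) * ‖v‖ :=
        mul_le_mul_of_nonneg_right h2 (norm_nonneg v)
      rw [inner_sub_left] at h1
      nlinarith [sq_nonneg ‖v‖]
    linarith
  have hcont : Continuous w := by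
    have : ∀ t, DifferentiableAt ℝ w t := fun t => (hw t).differentiableAt
    exact Differentiable.continuous this
  have mono : MonotoneOn w (Set.Icc (0:ℝ) 1) := by
    apply monotoneOn_of_deriv_nonneg (convex_Icc 0 1) (hcont.continuousOn)
    · intro t ht
      rw [interior_Icc] at ht
      exact ((hw t).differentiableAt).differentiableWithinAt
    · intro t ht
      rw [interior_Icc] at ht
      exact hd t ht
  have h01 := mono (Set.left_mem_Icc.mpr zero_le_one) (Set.right_mem_Icc.mpr zero_le_one)
    zero_le_one
  have e0 : w 0 = h x - h x := by simp [hwdef]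
  have e1 : w 1 = h x + ⟪g x, v⟫ + L/2 * ‖v‖^2 - h y := by
    simp [hwdef, hv]
  rw [e0, e1] at h01
  linarith

lemma key_alg (a b G η k t : ℝ) (ha : 0 ≤ a) (hb : 0 ≤ b) (hG : 0 ≤ G)
    (hη : 0 ≤ η) (hk : 0 ≤ k) (ht : 0 ≤ t)
    (h1 : b^2 ≤ a^2 - η*k*G^2) (h2 : 2*t*a ≤ G) : k*t*(η*G) + b ≤ a := by
  have hG2 : 0 ≤ η*k*G^2 := by positivity
  have hab : b ≤ a := by nlinarith
  rcases eq_or_lt_of_le (show (0:ℝ) ≤ a + b by linarith) with h0 | h0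
  · have ha0 : a = 0 := by linarith
    have hb0 : b = 0 := by linarith
    have hz : η*k*G^2 = 0 := by nlinarith
    have hzz : k*t*(η*G) = 0 := by
      rcases mul_eq_zero.mp hz with h' | h'
      · rcases mul_eq_zero.mp h' with h'' | h'' <;> simp [h'']
      · have : G = 0 := pow_eq_zero_iff two_ne_zero |>.mp h'
        simp [this]
    rw [hzz, hb0, ha0]; norm_num
  · have step : k*t*(η*G)*(a+b) ≤ (a-b)*(a+b) := by
      nlinarith [mul_le_mul_of_nonneg_left h2 (show 0 ≤ η*k*G by positivity),
        mul_le_mul_of_nonneg_left hab (show 0 ≤ k*t*η*G by positivity)]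
    have := (mul_le_mul_iff_of_pos_right h0).mp step
    linarith

lemma per_eta (h : E → ℝ) (g : E → E) (L μ hstar : ℝ) (hμ : 0 < μ)
    (hdiff : ∀ x, HasGradientAt h (g x) x)
    (hlip : ∀ x₁ x₂, ‖g x₁ - g x₂‖ ≤ L * ‖x₁ - x₂‖)
    (hinf : ∀ x, hstar ≤ h x)
    (hPL : ∀ x, ‖g x‖ ^ 2 ≥ 2 * μ * (h x - hstar))
    (x : E) (η : ℝ) (hη : 0 < η) (hLη : L * η ≤ 1) :
    (1 - L*η/2)^2 * (μ/2) * (Metric.infDist x {y | h y = hstar})^2 ≤ h x - hstar := by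
  set k : ℝ := 1 - L*η/2 with hkdef
  have hk : (1:ℝ)/2 ≤ k := by rw [hkdef]; linarith
  have hk0 : 0 < k := lt_of_lt_of_le one_half_pos hk
  set t : ℝ := Real.sqrt (μ/2) with htdef
  have ht0 : 0 < t := Real.sqrt_pos.mpr (by linarith)
  have ht2 : t^2 = μ/2 := Real.sq_sqrt (by linarith)
  set F : ℕ → E := fun n => (fun p => p - η • g p)^[n] x with hFdef
  have hF0 : F 0 = x := rfl
  have hFs : ∀ n, F (n+1) = F n - η • g (F n) := fun n =>
    Function.iterate_succ_apply' _ n x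
  set Δ : ℕ → ℝ := fun n => h (F n) - hstar with hΔdef
  have hΔeq : ∀ n, Δ n = h (F n) - hstar := fun n => rfl
  have hΔ0 : ∀ n, 0 ≤ Δ n := fun n => by rw [hΔeq n]; linarith [hinf (F n)]
  have hdiffFn : ∀ n, F (n+1) - F n = -(η • g (F n)) := fun n => by
    rw [hFs n]; abel
  have hnormFn : ∀ n, ‖F (n+1) - F n‖ = η * ‖g (F n)‖ := fun n => by
    rw [hdiffFn n, norm_neg, norm_smul, Real.norm_eq_abs, abs_of_pos hη]
  have step : ∀ n, Δ (n+1) ≤ Δ n - η*k*‖g (F n)‖^2 := by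
    intro n
    have hd := descent h g L hdiff hlip (F n) (F (n+1))
    rw [hdiffFn n] at hd
    rw [inner_neg_right, real_inner_smul_right, real_inner_self_eq_norm_sq] at hd
    have hnrm : ‖-(η • g (F n))‖ = η * ‖g (F n)‖ := by
      rw [norm_neg, norm_smul, Real.norm_eq_abs, abs_of_pos hη]
    rw [hnrm] at hd
    have hkG : η*k*‖g (F n)‖^2 = η*‖g (F n)‖^2 - L/2*(η*‖g (F n)‖)^2 := by
      rw [hkdef]; ring
    rw [hΔeq (n+1), hΔeq n, hkG]
    linarith
  have key : ∀ n, k*t*‖F (n+1) - F n‖ + Real.sqrt (Δ (n+1)) ≤ Real.sqrt (Δ n) := by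
    intro n
    rw [hnormFn n]
    have ha := Real.sqrt_nonneg (Δ n)
    have hb := Real.sqrt_nonneg (Δ (n+1))
    have ha2 : Real.sqrt (Δ n) ^ 2 = Δ n := Real.sq_sqrt (hΔ0 n)
    have hb2 : Real.sqrt (Δ (n+1)) ^ 2 = Δ (n+1) := Real.sq_sqrt (hΔ0 (n+1))
    have h2 : 2*t*Real.sqrt (Δ n) ≤ ‖g (F n)‖ := by
      have hpl := hPL (F n)
      have hsq : (2*t*Real.sqrt (Δ n))^2 ≤ ‖g (F n)‖^2 := by
        have he : (2*t*Real.sqrt (Δ n))^2 = 2*μ*(Δ n) := by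
          calc (2*t*Real.sqrt (Δ n))^2 = 4*t^2*(Real.sqrt (Δ n))^2 := by ring
            _ = 2*μ*(Δ n) := by rw [ht2, ha2]; ring
        rw [he, hΔeq n]; exact hpl
      have h2a : 0 ≤ 2*t*Real.sqrt (Δ n) := by positivity
      have := Real.sqrt_le_sqrt hsq
      rwa [Real.sqrt_sq h2a, Real.sqrt_sq (norm_nonneg _)] at this
    exact key_alg _ _ _ _ _ _ ha hb (norm_nonneg _) hη.le hk0.le ht0.le
      (by nlinarith [step n]) h2
  have hkt : 0 < k*t := mul_pos hk0 ht0
  have telescope : ∀ n, k*t*‖F n - x‖ + Real.sqrt (Δ n) ≤ Real.sqrt (Δ 0) := by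
    intro n
    induction n with
    | zero => simp [hF0]
    | succ n ih =>
      have tri : ‖F (n+1) - x‖ ≤ ‖F (n+1) - F n‖ + ‖F n - x‖ :=
        norm_sub_le_norm_sub_add_norm_sub _ _ _
      have := mul_le_mul_of_nonneg_left tri hkt.le
      rw [mul_add] at this
      have hk2 := key n
      linarith
  set r : ℝ := max 0 (1 - 2*μ*(η*k)) with hrdef
  have hr0 : 0 ≤ r := le_max_left _ _
  have hr1 : r < 1 := by
    apply max_lt one_pos
    have := mul_pos (mul_pos hμ hη) hk0
    nlinarith
  have geom : ∀ n, Δ n ≤ r^n * Δ 0 := by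
    intro n
    induction n with
    | zero => simp
    | succ n ih =>
      have hpl : 2*μ*(Δ n) ≤ ‖g (F n)‖^2 := by rw [hΔeq n]; exact hPL (F n)
      have h1 : Δ (n+1) ≤ (1 - 2*μ*(η*k)) * Δ n := by
        have := mul_le_mul_of_nonneg_left hpl (show 0 ≤ η*k by positivity)
        have hs := step n
        nlinarith
      have h2 : Δ (n+1) ≤ r * Δ n :=
        le_trans h1 (mul_le_mul_of_nonneg_right (le_max_right _ _) (hΔ0 n))
      calc Δ (n+1) ≤ r * Δ n := h2
        _ ≤ r * (r^n * Δ 0) := mul_le_mul_of_nonneg_left ih hr0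
        _ = r^(n+1) * Δ 0 := by ring
  have hsqrtgeom : ∀ n, Real.sqrt (Δ n) ≤ Real.sqrt r ^ n * Real.sqrt (Δ 0) := by
    intro n
    calc Real.sqrt (Δ n) ≤ Real.sqrt (r^n * Δ 0) := Real.sqrt_le_sqrt (geom n)
      _ = Real.sqrt r ^ n * Real.sqrt (Δ 0) := by
          rw [Real.sqrt_mul (pow_nonneg hr0 n)]
          congr 1
          induction n with
          | zero => simp
          | succ m ihm => rw [pow_succ, Real.sqrt_mul (pow_nonneg hr0 m), ihm, pow_succ]
  have hcauchy : CauchySeq F := by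
    apply cauchySeq_of_le_geometric (Real.sqrt r) (Real.sqrt (Δ 0) / (k*t))
      (by rw [← Real.sqrt_one]; exact Real.sqrt_lt_sqrt hr0 hr1)
    intro n
    rw [dist_eq_norm, norm_sub_rev]
    have hkey := key n
    have := hsqrtgeom n
    rw [div_mul_eq_mul_div, le_div_iff₀ hkt]
    calc ‖F (n+1) - F n‖ * (k*t) = k*t*‖F (n+1) - F n‖ := by ring
      _ ≤ Real.sqrt (Δ n) := by linarith [Real.sqrt_nonneg (Δ (n+1))]
      _ ≤ Real.sqrt (Δ 0) * Real.sqrt r ^ n := by linarith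
  obtain ⟨y, hy⟩ := cauchySeq_tendsto_of_complete hcauchy
  have hcont : Continuous h := continuous_iff_continuousAt.mpr
    fun p => (hdiff p).hasFDerivAt.continuousAt
  have hhy : Filter.Tendsto (fun n => h (F n)) Filter.atTop (nhds (h y)) :=
    (hcont.tendsto y).comp hy
  have hto : Filter.Tendsto (fun n => h (F n)) Filter.atTop (nhds hstar) := by
    have hup : Filter.Tendsto (fun n : ℕ => hstar + r^n * Δ 0) Filter.atTop
        (nhds (hstar + 0 * Δ 0)) :=
      Filter.Tendsto.const_add _
        ((tendsto_pow_atTop_nhds_zero_of_lt_one hr0 hr1).mul_const _)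
    rw [zero_mul, add_zero] at hup
    apply tendsto_of_tendsto_of_tendsto_of_le_of_le tendsto_const_nhds hup
    · intro n; exact hinf (F n)
    · intro n
      have h1 := geom n
      rw [hΔeq n] at h1
      show h (F n) ≤ hstar + r ^ n * Δ 0
      linarith
  have hy_star : h y = hstar := tendsto_nhds_unique hhy hto
  have hdist : k*t*‖y - x‖ ≤ Real.sqrt (Δ 0) := by
    apply le_of_tendsto' (f := fun n => k*t*‖F n - x‖)
      (((hy.sub_const x).norm).const_mul (k*t))
    intro n
    linarith [telescope n, Real.sqrt_nonneg (Δ n)]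
  set D : ℝ := Metric.infDist x {y | h y = hstar} with hDdef
  have hD0 : 0 ≤ D := Metric.infDist_nonneg
  have hDle : D ≤ ‖y - x‖ := by
    rw [hDdef]
    calc Metric.infDist x {y | h y = hstar} ≤ dist x y :=
          Metric.infDist_le_dist_of_mem hy_star
      _ = ‖y - x‖ := by rw [dist_eq_norm, norm_sub_rev]
  have hfinal : k*t*D ≤ Real.sqrt (Δ 0) := by
    have := mul_le_mul_of_nonneg_left hDle hkt.le
    linarith
  have hsq : (k*t*D)^2 ≤ Δ 0 := by
    have := pow_le_pow_left₀ (by positivity) hfinal 2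
    rwa [Real.sq_sqrt (hΔ0 0)] at this
  have hΔ0x : Δ 0 = h x - hstar := by rw [hΔeq 0, hF0]
  rw [hΔ0x] at hsq
  calc k^2 * (μ/2) * D^2 = (k*t*D)^2 := by rw [← ht2]; ring
    _ ≤ h x - hstar := hsq

end PLAux

/-- PL condition implies quadratic growth:
`h(x) − h* ≥ (μ/2)·dist(x, X*)²` where `X* = argmin h`. -/
theorem pl_implies_quadratic_growth
    {d : ℕ} (h : EuclideanSpace ℝ (Fin d) → ℝ)
    (gradh : EuclideanSpace ℝ (Fin d) → EuclideanSpace ℝ (Fin d))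
    (L μ hstar : ℝ) (hμ : 0 < μ)
    (hdiff : ∀ x, HasGradientAt h (gradh x) x)
    (hlip : ∀ x₁ x₂, ‖gradh x₁ - gradh x₂‖ ≤ L * ‖x₁ - x₂‖)
    (hinf : ∀ x, hstar ≤ h x)
    (hatt : ∃ x, h x = hstar)
    (hPL : ∀ x, ‖gradh x‖ ^ 2 ≥ 2 * μ * (h x - hstar)) :
    ∀ x, h x - hstar ≥ μ / 2 * (Metric.infDist x {y | h y = hstar}) ^ 2 := by
  intro x
  set D : ℝ := Metric.infDist x {y | h y = hstar} with hDdef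
  have hD0 : 0 ≤ D := Metric.infDist_nonneg
  have hB0 : 0 ≤ h x - hstar := by linarith [hinf x]
  have hδ : ∀ δ : ℝ, 0 < δ → δ ≤ 1 → (1-δ) * (μ/2 * D^2) ≤ h x - hstar := by
    intro δ hδ0 hδ1
    have hmax : 0 < max L 1 := lt_of_lt_of_le one_pos (le_max_right L 1)
    set η : ℝ := δ / max L 1 with hηdef
    have hη : 0 < η := div_pos hδ0 hmax
    have hLηδ : L * η ≤ δ := by
      have h1 : L * η ≤ max L 1 * η :=
        mul_le_mul_of_nonneg_right (le_max_left L 1) hη.le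
      have h2 : max L 1 * η = δ := by
        rw [hηdef, mul_div_cancel₀ _ (ne_of_gt hmax)]
      linarith
    have hLη : L * η ≤ 1 := le_trans hLηδ hδ1
    have hmain := per_eta h gradh L μ hstar hμ hdiff hlip hinf hPL x η hη hLη
    have hk1 : 1 - δ/2 ≤ 1 - L*η/2 := by linarith
    have hk2 : (1 - δ) ≤ (1 - L*η/2)^2 := by nlinarith
    have := mul_le_mul_of_nonneg_right hk2 (show 0 ≤ μ/2 * D^2 by positivity)
    calc (1-δ) * (μ/2 * D^2) ≤ (1 - L*η/2)^2 * (μ/2 * D^2) := this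
      _ = (1 - L*η/2)^2 * (μ/2) * D^2 := by ring
      _ ≤ h x - hstar := hmain
  by_contra hc
  push_neg at hc
  set A : ℝ := μ/2 * D^2 with hAdef
  set B : ℝ := h x - hstar with hBdef
  have hAB : B < A := hc
  have hA0 : 0 < A := lt_of_le_of_lt hB0 hAB
  have hδ0 : 0 < (A - B)/(2*A) := div_pos (by linarith) (by linarith)
  have hδ1 : (A - B)/(2*A) ≤ 1 := by
    rw [div_le_one (by positivity)]
    linarith
  have := hδ ((A - B)/(2*A)) hδ0 hδ1
  have hE : (1 - (A - B)/(2*A)) * A = (A + B)/2 := by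
    field_simp
    ring
  rw [hE] at this
  linarith
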